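/- Yokouchi-Hikita interpretation lemma: let R and S be reduction relations on a set X with R confluent and strongly normalizing, and S satisfying the diamond property (if t S u and t S v then there is s with u S s and v S s). Suppose furthermore that whenever t S u and t R v there is an s such that u R* s and v (R* ; S ; R*) s. Then the composite relation R* ; S ; R* is confluent. -/

import Mathlib

private def YHD {X : Type*} (R S : X → X → Prop) (x y : X) : Prop :=
  ∃ a b : X, Relation.ReflTransGen R x a ∧ S a b ∧ Relation.ReflTransGen R b y

private lemma YHD.mono_right {X : Type*} {R S : X → X → Prop} {x y z : X}
    (h : YHD R S x y) (h' : Relation.ReflTransGen R y z) : YHD R S x z := by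
  obtain ⟨a, b, h1, h2, h3⟩ := h
  exact ⟨a, b, h1, h2, h3.trans h'⟩

private lemma YHD.mono_left {X : Type*} {R S : X → X → Prop} {x y z : X}
    (h : Relation.ReflTransGen R x y) (h' : YHD R S y z) : YHD R S x z := by
  obtain ⟨a, b, h1, h2, h3⟩ := h'
  exact ⟨a, b, h.trans h1, h2, h3⟩

private lemma yh_wf {X : Type*} {R : X → X → Prop}
    (hSN : ∀ f : ℕ → X, ¬ (∀ n : ℕ, R (f n) (f (n + 1)))) :
    WellFounded (fun a b => R b a) := by
  constructor
  intro a
  by_contra ha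
  have key : ∀ x : X, ¬ Acc (fun a b => R b a) x →
      ∃ y, R x y ∧ ¬ Acc (fun a b => R b a) y := by
    intro x hx
    by_contra h
    push_neg at h
    exact hx (Acc.intro x fun y hy => h y hy)
  let g : {x : X // ¬ Acc (fun a b => R b a) x} → {x : X // ¬ Acc (fun a b => R b a) x} :=
    fun p => ⟨(key p.1 p.2).choose, (key p.1 p.2).choose_spec.2⟩
  let f : ℕ → {x : X // ¬ Acc (fun a b => R b a) x} := fun n => g^[n] ⟨a, ha⟩
  apply hSN (fun n => (f n).1)
  intro n
  have hfe : f (n + 1) = g (f n) := Function.iterate_succ_apply' g n _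
  show R (f n).1 (f (n + 1)).1
  rw [hfe]
  exact (key (f n).1 (f n).2).choose_spec.1

/-- Key commutation lemma, by noetherian induction: a single S step commutes
with R* up to the composite relation. -/
private lemma yh_lemA {X : Type*} {R S : X → X → Prop}
    (hwf : WellFounded (fun a b => R b a))
    (hRconf : ∀ x u v : X, Relation.ReflTransGen R x u →
        Relation.ReflTransGen R x v →
        ∃ t, Relation.ReflTransGen R u t ∧ Relation.ReflTransGen R v t)
    (hComm : ∀ t u v : X, S t u → R t v →
        ∃ s, Relation.ReflTransGen R u s ∧ YHD R S v s) :
    ∀ x u v : X, S x u → Relation.ReflTransGen R x v →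
      ∃ t, Relation.ReflTransGen R u t ∧ YHD R S v t := by
  intro x
  induction x using hwf.transGen.induction with
  | _ x IH =>
  intro u v hS hR
  rcases hR.cases_head with rfl | ⟨x₁, hx₁, hR'⟩
  · exact ⟨u, Relation.ReflTransGen.refl, _, u, Relation.ReflTransGen.refl, hS,
      Relation.ReflTransGen.refl⟩
  · obtain ⟨s, hus, a, b, ha, hab, hbs⟩ := hComm x u x₁ hS hx₁
    obtain ⟨w, haw, hvw⟩ := hRconf x₁ a v ha hR'
    have hlt : Relation.TransGen (fun p q => R q p) a x :=
      Relation.transGen_swap.mpr (Relation.TransGen.head' hx₁ ha)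
    obtain ⟨t', hbt', c, d, hwc, hcd, hdt'⟩ := IH a hlt b w hab haw
    obtain ⟨t, hst, ht't⟩ := hRconf b s t' hbs hbt'
    exact ⟨t, hus.trans hst, c, d, hvw.trans hwc, hcd, hdt'.trans ht't⟩

/-- Diamond property of the composite relation, by noetherian induction. -/
private lemma yh_dia {X : Type*} {R S : X → X → Prop}
    (hwf : WellFounded (fun a b => R b a))
    (hRconf : ∀ x u v : X, Relation.ReflTransGen R x u →
        Relation.ReflTransGen R x v →
        ∃ t, Relation.ReflTransGen R u t ∧ Relation.ReflTransGen R v t)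
    (hSdia : ∀ t u v : X, S t u → S t v → ∃ s, S u s ∧ S v s)
    (hComm : ∀ t u v : X, S t u → R t v →
        ∃ s, Relation.ReflTransGen R u s ∧ YHD R S v s) :
    ∀ x u v : X, YHD R S x u → YHD R S x v →
      ∃ t, YHD R S u t ∧ YHD R S v t := by
  have lemA := yh_lemA hwf hRconf hComm
  intro x
  induction x using hwf.transGen.induction with
  | _ x IH =>
  intro u v hu hv
  obtain ⟨a, b, ha, hab, hbu⟩ := hu
  obtain ⟨a', b', ha', hab', hbv⟩ := hv
  -- a uniform processing step, used when x has a one-step R-reduct x₁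
  have process : ∀ m a b u : X, Relation.ReflTransGen R x a → S a b →
      Relation.ReflTransGen R b u → Relation.ReflTransGen R x m →
      (∀ z, Relation.ReflTransGen R x z → Relation.ReflTransGen R m z →
        Relation.ReflTransGen R a z) →
      ∃ z, Relation.ReflTransGen R u z ∧ YHD R S m z := by
    intro m a b u hxa hab hbu hxm _
    obtain ⟨p, hap, hmp⟩ := hRconf x a m hxa hxm
    obtain ⟨q, hbq, hpq⟩ := lemA a b p hab hap
    obtain ⟨z, huz, hqz⟩ := hRconf b u q hbu hbq
    exact ⟨z, huz, YHD.mono_left hmp (hpq.mono_right hqz)⟩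
  rcases ha.cases_head with rfl | ⟨x₁, hx₁, hx₁a⟩
  · rcases ha'.cases_head with rfl | ⟨x₁', hx₁', hx₁a'⟩
    · -- both degenerate: use the diamond of S
      obtain ⟨s, hbs, hb's⟩ := hSdia x b b' hab hab'
      obtain ⟨w₁, hsw₁, huw₁⟩ := lemA b s u hbs hbu
      obtain ⟨w₂, hsw₂, hvw₂⟩ := lemA b' s v hb's hbv
      obtain ⟨z, hw₁z, hw₂z⟩ := hRconf s w₁ w₂ hsw₁ hsw₂
      exact ⟨z, huw₁.mono_right hw₁z, hvw₂.mono_right hw₂z⟩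
    · -- side 2 starts with an R step, side 1 is degenerate
      obtain ⟨s, hbs, hx₁'s⟩ := hComm x b x₁' hab hx₁'
      obtain ⟨z, huz, hsz⟩ := hRconf b u s hbu hbs
      have hx₁'z : YHD R S x₁' z := hx₁'s.mono_right hsz
      have hx₁'v : YHD R S x₁' v := ⟨a', b', hx₁a', hab', hbv⟩
      have hlt : Relation.TransGen (fun p q => R q p) x₁' x :=
        Relation.TransGen.single hx₁'
      obtain ⟨w, hzw, hvw⟩ := IH x₁' hlt z v hx₁'z hx₁'v
      exact ⟨w, YHD.mono_left huz hzw, hvw⟩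
  · rcases ha'.cases_head with rfl | ⟨x₁', hx₁', hx₁a'⟩
    · -- side 1 starts with an R step, side 2 is degenerate
      obtain ⟨s, hb's, hx₁s⟩ := hComm x b' x₁ hab' hx₁
      obtain ⟨z, hvz, hsz⟩ := hRconf b' v s hbv hb's
      have hx₁z : YHD R S x₁ z := hx₁s.mono_right hsz
      have hx₁u : YHD R S x₁ u := ⟨a, b, hx₁a, hab, hbu⟩
      have hlt : Relation.TransGen (fun p q => R q p) x₁ x :=
        Relation.TransGen.single hx₁
      obtain ⟨w, hzw, huw⟩ := IH x₁ hlt z u hx₁z hx₁u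
      exact ⟨w, huw, YHD.mono_left hvz hzw⟩
    · -- both sides start with an R step: join x₁ and x₁' at m
      obtain ⟨m, hx₁m, hx₁'m⟩ := hRconf x x₁ x₁'
        (Relation.ReflTransGen.single hx₁) (Relation.ReflTransGen.single hx₁')
      -- process side 1
      obtain ⟨p, hap, hmp⟩ := hRconf x₁ a m hx₁a hx₁m
      obtain ⟨q, hbq, hpq⟩ := lemA a b p hab hap
      obtain ⟨z, huz, hqz⟩ := hRconf b u q hbu hbq
      have hmz : YHD R S m z := YHD.mono_left hmp (hpq.mono_right hqz)
      -- process side 2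
      obtain ⟨p', hap', hmp'⟩ := hRconf x₁' a' m hx₁a' hx₁'m
      obtain ⟨q', hbq', hpq'⟩ := lemA a' b' p' hab' hap'
      obtain ⟨z', hvz', hqz'⟩ := hRconf b' v q' hbv hbq'
      have hmz' : YHD R S m z' := YHD.mono_left hmp' (hpq'.mono_right hqz')
      have hlt : Relation.TransGen (fun p q => R q p) m x :=
        Relation.transGen_swap.mpr (Relation.TransGen.head' hx₁ hx₁m)
      obtain ⟨w, hzw, hz'w⟩ := IH m hlt z z' hmz hmz'
      exact ⟨w, YHD.mono_left huz hzw, YHD.mono_left hvz' hz'w⟩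

/-- Yokouchi-Hikita interpretation lemma: if R is confluent
and strongly normalizing, S has the diamond property, and whenever t S u and
t R v there is s with u R* s and v (R* ; S ; R*) s, then the composite
relation C = (R* ; S ; R*) is confluent. -/
theorem yokouchi_hikita {X : Type*} (R S C : X → X → Prop)
    (hC : ∀ x y : X, C x y ↔ ∃ a b : X,
        Relation.ReflTransGen R x a ∧ S a b ∧ Relation.ReflTransGen R b y)
    (hSN : ∀ f : ℕ → X, ¬ (∀ n : ℕ, R (f n) (f (n + 1))))
    (hRconf : ∀ x u v : X, Relation.ReflTransGen R x u →
        Relation.ReflTransGen R x v →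
        ∃ t, Relation.ReflTransGen R u t ∧ Relation.ReflTransGen R v t)
    (hSdia : ∀ t u v : X, S t u → S t v → ∃ s, S u s ∧ S v s)
    (hComm : ∀ t u v : X, S t u → R t v →
        ∃ s, Relation.ReflTransGen R u s ∧ C v s) :
    ∀ x u v : X, Relation.ReflTransGen C x u → Relation.ReflTransGen C x v →
      ∃ t, Relation.ReflTransGen C u t ∧ Relation.ReflTransGen C v t := by
  have hCD : ∀ x y, C x y ↔ YHD R S x y := hC
  have hwf := yh_wf hSN
  have hComm' : ∀ t u v : X, S t u → R t v →
      ∃ s, Relation.ReflTransGen R u s ∧ YHD R S v s := by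
    intro t u v h1 h2
    obtain ⟨s, h3, h4⟩ := hComm t u v h1 h2
    exact ⟨s, h3, (hCD v s).mp h4⟩
  have hdia := yh_dia hwf hRconf hSdia hComm'
  intro x u v hxu hxv
  have hxu' : Relation.ReflTransGen (YHD R S) x u :=
    Relation.ReflTransGen.mono (fun a b h => (hCD a b).mp h) _ _ hxu
  have hxv' : Relation.ReflTransGen (YHD R S) x v :=
    Relation.ReflTransGen.mono (fun a b h => (hCD a b).mp h) _ _ hxv
  have cr := Relation.church_rosser
    (r := YHD R S)
    (fun a b c hab hac => by
      obtain ⟨d, h1, h2⟩ := hdia a b c hab hac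
      exact ⟨d, Relation.ReflGen.single h1, Relation.ReflTransGen.single h2⟩)
    hxu' hxv'
  obtain ⟨t, h1, h2⟩ := cr
  exact ⟨t, Relation.ReflTransGen.mono (fun a b h => (hCD a b).mpr h) _ _ h1,
    Relation.ReflTransGen.mono (fun a b h => (hCD a b).mpr h) _ _ h2⟩
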